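/- On M = ℝ, the ideal of smooth real-valued functions vanishing identically on the interval [0,1] is not finitely generated as a C∞(ℝ)-module. -/

import Mathlib

set_option maxHeartbeats 1000000

open Set Filter intervalIntegral

namespace Stmt14Aux

/-- iterated derivatives vanish on `[0,1]` -/
theorem flat (h : ℝ → ℝ) (hh : ContDiff ℝ (⊤ : ℕ∞) h)
    (hvan : ∀ x ∈ Set.Icc (0:ℝ) 1, h x = 0) :
    ∀ j, ∀ x ∈ Set.Icc (0:ℝ) 1, iteratedDeriv j h x = 0 := by
  intro j
  induction j with
  | zero => simpa using hvan
  | succ j ih =>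
    -- first on the open interval
    have hopen : ∀ x ∈ Set.Ioo (0:ℝ) 1, iteratedDeriv (j+1) h x = 0 := by
      intro x hx
      rw [iteratedDeriv_succ]
      have hev : iteratedDeriv j h =ᶠ[nhds x] (fun _ => (0:ℝ)) := by
        have : Set.Ioo (0:ℝ) 1 ∈ nhds x := isOpen_Ioo.mem_nhds hx
        filter_upwards [this] with y hy
        exact ih y (Set.Ioo_subset_Icc_self hy)
      rw [hev.deriv_eq]
      simp
    have hcont : Continuous (iteratedDeriv (j+1) h) :=
      hh.continuous_iteratedDeriv (j+1) (by exact_mod_cast le_top)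
    have hclosed : IsClosed {x : ℝ | iteratedDeriv (j+1) h x = 0} :=
      isClosed_eq hcont continuous_const
    intro x hx
    have hsub : Set.Ioo (0:ℝ) 1 ⊆ {x : ℝ | iteratedDeriv (j+1) h x = 0} := hopen
    have : Set.Icc (0:ℝ) 1 ⊆ {x : ℝ | iteratedDeriv (j+1) h x = 0} := by
      rw [← closure_Ioo (by norm_num : (0:ℝ) ≠ 1)]
      exact hclosed.closure_subset_iff.2 hsub
    exact this hx

/-- Taylor-type bound near 1 from the right, all orders -/
theorem taylorBound (h : ℝ → ℝ) (hh : ContDiff ℝ (⊤ : ℕ∞) h)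
    (hvan : ∀ x ∈ Set.Icc (0:ℝ) 1, h x = 0) :
    ∀ N j, ∃ C > 0, ∀ s ∈ Set.Icc (0:ℝ) 1, |iteratedDeriv j h (1+s)| ≤ C * s ^ N := by
  intro N
  induction N with
  | zero =>
    intro j
    have hcont : Continuous (iteratedDeriv j h) :=
      hh.continuous_iteratedDeriv j (by exact_mod_cast le_top)
    obtain ⟨C, hC⟩ := (isCompact_Icc (a := (1:ℝ)) (b := 2)).exists_bound_of_continuousOn
      hcont.continuousOn
    refine ⟨max C 0 + 1, by positivity, fun s hs => ?_⟩
    have h1 : |iteratedDeriv j h (1+s)| ≤ C := by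
      have := hC (1+s) ⟨by linarith [hs.1], by linarith [hs.2]⟩
      simpa using this
    exact h1.trans (by simp; linarith [le_max_left C 0])
  | succ N ihN =>
    intro j
    obtain ⟨C, hCpos, hC⟩ := ihN (j+1)
    refine ⟨C, hCpos, fun s hs => ?_⟩
    have hdiff : ∀ x : ℝ, DifferentiableAt ℝ (iteratedDeriv j h) x := by
      intro x
      exact (hh.differentiable_iteratedDeriv j
        (by exact_mod_cast lt_top_iff_ne_top.2 (by simp) : (j : WithTop ℕ∞) < (⊤ : ℕ∞))) x
    have hcont' : Continuous (iteratedDeriv (j+1) h) :=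
      hh.continuous_iteratedDeriv (j+1) (by exact_mod_cast le_top)
    -- FTC
    have key : iteratedDeriv j h (1+s) = ∫ t in (0:ℝ)..s, iteratedDeriv (j+1) h (1+t) := by
      have h1 : ∫ t in (0:ℝ)..s, iteratedDeriv (j+1) h (1+t)
          = ∫ u in (1:ℝ)..(1+s), iteratedDeriv (j+1) h u := by
        simpa using intervalIntegral.integral_comp_add_left (a := 0) (b := s)
          (iteratedDeriv (j+1) h) 1
      have h2 : ∫ u in (1:ℝ)..(1+s), deriv (iteratedDeriv j h) u
          = iteratedDeriv j h (1+s) - iteratedDeriv j h 1 := by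
        apply intervalIntegral.integral_deriv_eq_sub (fun x _ => hdiff x)
        rw [← iteratedDeriv_succ]
        exact hcont'.intervalIntegrable _ _
      have h3 : iteratedDeriv j h 1 = 0 := flat h hh hvan j 1 ⟨by norm_num, le_refl 1⟩
      rw [h1, ← iteratedDeriv_succ] at *
      rw [h1, h2, h3, sub_zero]
    rw [key]
    have habs : |∫ t in (0:ℝ)..s, iteratedDeriv (j+1) h (1+t)|
        ≤ ∫ t in (0:ℝ)..s, |iteratedDeriv (j+1) h (1+t)| :=
      intervalIntegral.abs_integral_le_integral_abs hs.1
    have hmono : ∫ t in (0:ℝ)..s, |iteratedDeriv (j+1) h (1+t)|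
        ≤ ∫ t in (0:ℝ)..s, C * t ^ N := by
      apply intervalIntegral.integral_mono_on hs.1
      · exact ((hcont'.comp (continuous_const.add continuous_id)).abs).intervalIntegrable _ _
      · exact (Continuous.intervalIntegrable (by continuity) _ _)
      · intro t ht
        exact hC t ⟨ht.1, le_trans ht.2 hs.2⟩
    have hval : ∫ t in (0:ℝ)..s, C * t ^ N = C * (s ^ (N+1) / (N+1)) := by
      rw [intervalIntegral.integral_const_mul, integral_pow]
      norm_num
    calc |∫ t in (0:ℝ)..s, iteratedDeriv (j+1) h (1+t)|
        ≤ C * (s ^ (N+1) / (N+1)) := by rw [← hval]; exact habs.trans hmono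
      _ ≤ C * s ^ (N+1) := by
          apply mul_le_mul_of_nonneg_left _ (le_of_lt hCpos)
          apply div_le_self
          · have := hs.1; positivity
          have : (0:ℝ) ≤ (N:ℝ) := Nat.cast_nonneg N
          linarith


noncomputable def Gd (h : ℝ → ℝ) : ℕ → ℝ → ℝ
  | 0 => fun r => ∫ t in (0:ℝ)..r, h (1+t)
  | (j+1) => fun s => iteratedDeriv j h (1+s)

theorem Gd_zero (h : ℝ → ℝ) (r : ℝ) : Gd h 0 r = ∫ t in (0:ℝ)..r, h (1+t) := rfl
theorem Gd_succ (h : ℝ → ℝ) (j : ℕ) (s : ℝ) : Gd h (j+1) s = iteratedDeriv j h (1+s) := rfl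

theorem Gd_hasDerivAt (h : ℝ → ℝ) (hh : ContDiff ℝ (⊤ : ℕ∞) h) :
    ∀ j s, HasDerivAt (Gd h j) (Gd h (j+1) s) s := by
  intro j s
  match j with
  | 0 =>
    have hcont : Continuous (fun t => h (1+t)) :=
      (hh.continuous).comp (continuous_const.add continuous_id)
    have hD := intervalIntegral.integral_hasDerivAt_right
      (hcont.intervalIntegrable 0 s)
      (hcont.stronglyMeasurableAtFilter _ _)
      hcont.continuousAt
    have heq : Gd h 1 s = h (1+s) := by rw [Gd_succ]; simp
    rw [heq]
    exact hD
  | (j+1) =>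
    have hdiff : DifferentiableAt ℝ (iteratedDeriv j h) (1+s) :=
      (hh.differentiable_iteratedDeriv j
        (by exact_mod_cast lt_top_iff_ne_top.2 (by simp) : (j : WithTop ℕ∞) < (⊤ : ℕ∞))) _
    have h1 : HasDerivAt (iteratedDeriv j h) (iteratedDeriv (j+1) h (1+s)) (1+s) := by
      rw [iteratedDeriv_succ]; exact hdiff.hasDerivAt
    have h2 : HasDerivAt (fun t : ℝ => (1:ℝ)+t) 1 s := by
      simpa using (hasDerivAt_id s).const_add 1
    have := HasDerivAt.comp s h1 h2
    simp only [Gd_succ]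
    rw [mul_one] at this
    exact this

theorem Gd_bound (h : ℝ → ℝ) (hh : ContDiff ℝ (⊤ : ℕ∞) h)
    (hvan : ∀ x ∈ Set.Icc (0:ℝ) 1, h x = 0) :
    ∀ j N, ∃ C > 0, ∀ s ∈ Set.Icc (0:ℝ) 1, |Gd h j s| ≤ C * s ^ N := by
  intro j N
  match j with
  | (j+1) => simpa [Gd_succ] using taylorBound h hh hvan N j
  | 0 =>
    obtain ⟨C, hCpos, hC⟩ := taylorBound h hh hvan N 0
    refine ⟨C, hCpos, fun s hs => ?_⟩
    have habs : |Gd h 0 s| ≤ ∫ t in (0:ℝ)..s, |h (1+t)| := by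
      rw [Gd_zero]; exact intervalIntegral.abs_integral_le_integral_abs (f := fun t => h (1+t)) hs.1
    have hcont : Continuous (fun t => h (1+t)) :=
      (hh.continuous).comp (continuous_const.add continuous_id)
    have hmono : ∫ t in (0:ℝ)..s, |h (1+t)| ≤ ∫ t in (0:ℝ)..s, C * t ^ N := by
      apply intervalIntegral.integral_mono_on hs.1
      · exact hcont.abs.intervalIntegrable _ _
      · exact Continuous.intervalIntegrable (by continuity) _ _
      · intro t ht
        simpa using hC t ⟨ht.1, le_trans ht.2 hs.2⟩
    have hval : ∫ t in (0:ℝ)..s, C * t ^ N = C * (s ^ (N+1) / (N+1)) := by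
      rw [intervalIntegral.integral_const_mul, integral_pow]; norm_num
    have h1 : |Gd h 0 s| ≤ C * (s ^ (N+1) / (N+1)) := by
      rw [← hval]; exact habs.trans hmono
    calc |Gd h 0 s| ≤ C * (s ^ (N+1) / (N+1)) := h1
      _ ≤ C * s ^ (N+1) := by
          apply mul_le_mul_of_nonneg_left _ (le_of_lt hCpos)
          apply div_le_self
          · have := hs.1; positivity
          · have : (0:ℝ) ≤ (N:ℝ) := Nat.cast_nonneg N
            linarith
      _ ≤ C * s ^ N := by
          apply mul_le_mul_of_nonneg_left _ (le_of_lt hCpos)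
          exact pow_le_pow_of_le_one hs.1 hs.2 (Nat.le_succ N)

theorem Gd_nonneg (h : ℝ → ℝ) (hpos : ∀ x, 0 ≤ h x) :
    ∀ r, 0 ≤ r → 0 ≤ Gd h 0 r := by
  intro r hr
  exact intervalIntegral.integral_nonneg hr (fun u _ => hpos _)

theorem Gd_mono (h : ℝ → ℝ) (hh : ContDiff ℝ (⊤ : ℕ∞) h) (hpos : ∀ x, 0 ≤ h x) :
    ∀ r1 r2, r1 ≤ r2 → Gd h 0 r1 ≤ Gd h 0 r2 := by
  intro r1 r2 hr
  have hcont : Continuous (fun t => h (1+t)) :=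
    (hh.continuous).comp (continuous_const.add continuous_id)
  have hadd := intervalIntegral.integral_add_adjacent_intervals (μ := MeasureTheory.volume)
    (hcont.intervalIntegrable 0 r1) (hcont.intervalIntegrable r1 r2)
  have h2 : 0 ≤ ∫ t in r1..r2, h (1+t) :=
    intervalIntegral.integral_nonneg hr (fun u _ => hpos _)
  simp only [Gd_zero]
  linarith [hadd]

noncomputable def term (h : ℝ → ℝ) (p : ℝ × ℕ × ℝ) (t : ℝ) : ℝ :=
  p.1 * Gd h p.2.1 (t ^ (4⁻¹ : ℝ)) * t ^ p.2.2

noncomputable def evalL (h : ℝ → ℝ) (l : List (ℝ × ℕ × ℝ)) (t : ℝ) : ℝ :=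
  (l.map (fun p => term h p t)).sum

noncomputable def derP (p : ℝ × ℕ × ℝ) : List (ℝ × ℕ × ℝ) :=
  [(p.1/4, p.2.1+1, p.2.2 - 3/4), (p.1*p.2.2, p.2.1, p.2.2 - 1)]

noncomputable def derL (l : List (ℝ × ℕ × ℝ)) : List (ℝ × ℕ × ℝ) := l.flatMap derP

theorem evalL_nil (h : ℝ → ℝ) (t : ℝ) : evalL h [] t = 0 := rfl
theorem evalL_cons (h : ℝ → ℝ) (p : ℝ × ℕ × ℝ) (l : List (ℝ × ℕ × ℝ)) (t : ℝ) :
    evalL h (p :: l) t = term h p t + evalL h l t := by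
  simp [evalL]

theorem evalL_append (h : ℝ → ℝ) (l1 l2 : List (ℝ × ℕ × ℝ)) (t : ℝ) :
    evalL h (l1 ++ l2) t = evalL h l1 t + evalL h l2 t := by
  simp [evalL]

theorem term_hasDerivAt (h : ℝ → ℝ) (hh : ContDiff ℝ (⊤ : ℕ∞) h)
    (p : ℝ × ℕ × ℝ) {t : ℝ} (ht : 0 < t) :
    HasDerivAt (term h p) (evalL h (derP p) t) t := by
  obtain ⟨c, j, e⟩ := p
  have hrpow : HasDerivAt (fun t : ℝ => t ^ (4⁻¹ : ℝ)) (4⁻¹ * t ^ ((4⁻¹ : ℝ) - 1)) t :=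
    Real.hasDerivAt_rpow_const (Or.inl (ne_of_gt ht))
  have hGd : HasDerivAt (Gd h j) (Gd h (j+1) (t ^ (4⁻¹ : ℝ))) (t ^ (4⁻¹ : ℝ)) :=
    Gd_hasDerivAt h hh j _
  have hcomp : HasDerivAt (fun t : ℝ => Gd h j (t ^ (4⁻¹ : ℝ)))
      (Gd h (j+1) (t ^ (4⁻¹ : ℝ)) * (4⁻¹ * t ^ ((4⁻¹ : ℝ) - 1))) t :=
    (HasDerivAt.comp t hGd hrpow :)
  have hpow : HasDerivAt (fun t : ℝ => t ^ e) (e * t ^ (e - 1)) t :=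
    Real.hasDerivAt_rpow_const (Or.inl (ne_of_gt ht))
  have hmul := (hcomp.mul hpow).const_mul c
  have heq : c * (Gd h (j+1) (t ^ (4⁻¹ : ℝ)) * (4⁻¹ * t ^ ((4⁻¹ : ℝ) - 1)) * t ^ e
      + Gd h j (t ^ (4⁻¹ : ℝ)) * (e * t ^ (e - 1)))
      = evalL h (derP (c, j, e)) t := by
    simp only [derP, evalL_cons, evalL_nil, term]
    have h1 : t ^ ((4⁻¹ : ℝ) - 1) * t ^ e = t ^ (e - 3/4) := by
      rw [← Real.rpow_add ht]; ring_nf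
    have h2 : (t:ℝ) ^ (e - 1) = t ^ (e - 1) := rfl
    rw [← h1]
    ring
  have : term h (c, j, e) = fun t : ℝ => c * (Gd h j (t ^ (4⁻¹ : ℝ)) * t ^ e) := by
    funext u; simp [term]; ring
  rw [this]
  have hmul' : HasDerivAt (fun t : ℝ => c * (Gd h j (t ^ (4⁻¹ : ℝ)) * t ^ e))
      (c * (Gd h (j+1) (t ^ (4⁻¹ : ℝ)) * (4⁻¹ * t ^ ((4⁻¹ : ℝ) - 1)) * t ^ e
        + Gd h j (t ^ (4⁻¹ : ℝ)) * (e * t ^ (e - 1)))) t := hmul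
  rw [heq] at hmul'
  exact hmul'

theorem evalL_hasDerivAt (h : ℝ → ℝ) (hh : ContDiff ℝ (⊤ : ℕ∞) h)
    (l : List (ℝ × ℕ × ℝ)) {t : ℝ} (ht : 0 < t) :
    HasDerivAt (evalL h l) (evalL h (derL l) t) t := by
  induction l with
  | nil =>
    simp only [derL, List.flatMap_nil]
    have : evalL h [] = fun _ : ℝ => (0:ℝ) := rfl
    rw [this]
    simpa using hasDerivAt_const t (0:ℝ)
  | cons p l ih =>
    have : evalL h (p :: l) = fun u => term h p u + evalL h l u := by
      funext u; rw [evalL_cons]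
    rw [this]
    have hd : derL (p :: l) = derP p ++ derL l := by simp [derL]
    rw [hd, evalL_append]
    exact (term_hasDerivAt h hh p ht).add ih

theorem term_tendsto (h : ℝ → ℝ) (hh : ContDiff ℝ (⊤ : ℕ∞) h)
    (hvan : ∀ x ∈ Set.Icc (0:ℝ) 1, h x = 0) (p : ℝ × ℕ × ℝ) :
    Filter.Tendsto (term h p) (nhdsWithin 0 (Set.Ioi 0)) (nhds 0) := by
  obtain ⟨c, j, e⟩ := p
  obtain ⟨N, hN⟩ := exists_nat_ge (4 * (1 - e))
  obtain ⟨C, hCpos, hC⟩ := Gd_bound h hh hvan j N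
  have hbound : ∀ t ∈ Set.Ioc (0:ℝ) 1, |term h (c, j, e) t| ≤ |c| * C * t := by
    intro t ht
    have ht0 : (0:ℝ) < t := ht.1
    have hs0 : (0:ℝ) ≤ t ^ (4⁻¹ : ℝ) := Real.rpow_nonneg ht0.le _
    have hs1 : t ^ (4⁻¹ : ℝ) ≤ 1 := Real.rpow_le_one ht0.le ht.2 (by norm_num)
    have hG := hC _ ⟨hs0, hs1⟩
    have habs : |term h (c, j, e) t| = |c| * |Gd h j (t ^ (4⁻¹ : ℝ))| * t ^ e := by
      simp only [term]
      rw [abs_mul, abs_mul, abs_of_pos (Real.rpow_pos_of_pos ht0 e)]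
    rw [habs]
    have h1 : |c| * |Gd h j (t ^ (4⁻¹ : ℝ))| * t ^ e ≤ |c| * (C * (t ^ (4⁻¹ : ℝ)) ^ N) * t ^ e := by
      have := mul_le_mul_of_nonneg_left hG (abs_nonneg c)
      exact mul_le_mul_of_nonneg_right (by linarith) (Real.rpow_pos_of_pos ht0 e).le
    have h2 : (t ^ (4⁻¹ : ℝ)) ^ N * t ^ e = t ^ ((N : ℝ) * 4⁻¹ + e) := by
      rw [← Real.rpow_natCast (t ^ (4⁻¹ : ℝ)) N, ← Real.rpow_mul ht0.le,
        Real.rpow_add ht0]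
      ring_nf
    have h3 : t ^ ((N : ℝ) * 4⁻¹ + e) ≤ t ^ (1:ℝ) := by
      apply Real.rpow_le_rpow_of_exponent_ge ht0 ht.2
      linarith
    calc |c| * |Gd h j (t ^ (4⁻¹ : ℝ))| * t ^ e
        ≤ |c| * (C * (t ^ (4⁻¹ : ℝ)) ^ N) * t ^ e := h1
      _ = |c| * C * ((t ^ (4⁻¹ : ℝ)) ^ N * t ^ e) := by ring
      _ = |c| * C * t ^ ((N : ℝ) * 4⁻¹ + e) := by rw [h2]
      _ ≤ |c| * C * t ^ (1:ℝ) := by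
          apply mul_le_mul_of_nonneg_left h3 (by positivity)
      _ = |c| * C * t := by rw [Real.rpow_one]
  -- squeeze
  have hev : ∀ᶠ t in nhdsWithin (0:ℝ) (Set.Ioi 0), |term h (c, j, e) t| ≤ |c| * C * t := by
    have hmem : Set.Ioc (0:ℝ) 1 ∈ nhdsWithin (0:ℝ) (Set.Ioi 0) := by
      apply mem_nhdsWithin.2
      exact ⟨Set.Iio 1, isOpen_Iio, by norm_num, fun x hx => ⟨hx.2, le_of_lt hx.1⟩⟩
    filter_upwards [hmem] with t ht
    exact hbound t ht
  have htend : Filter.Tendsto (fun t : ℝ => |c| * C * t) (nhdsWithin 0 (Set.Ioi 0)) (nhds 0) := by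
    have := (continuous_const.mul continuous_id (f := fun t : ℝ => |c| * C)).tendsto (0:ℝ)
    simp only [mul_zero, id, Pi.mul_apply] at this
    exact this.mono_left nhdsWithin_le_nhds
  have h0 : Filter.Tendsto (fun t => |term h (c, j, e) t|) (nhdsWithin 0 (Set.Ioi 0)) (nhds 0) :=
    squeeze_zero' (Filter.Eventually.of_forall (fun t => abs_nonneg _)) hev htend
  exact (tendsto_zero_iff_abs_tendsto_zero _).2 h0

theorem evalL_tendsto (h : ℝ → ℝ) (hh : ContDiff ℝ (⊤ : ℕ∞) h)
    (hvan : ∀ x ∈ Set.Icc (0:ℝ) 1, h x = 0) (l : List (ℝ × ℕ × ℝ)) :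
    Filter.Tendsto (evalL h l) (nhdsWithin 0 (Set.Ioi 0)) (nhds 0) := by
  induction l with
  | nil =>
    have : evalL h [] = fun _ : ℝ => (0:ℝ) := rfl
    rw [this]; exact tendsto_const_nhds
  | cons p l ih =>
    have : evalL h (p :: l) = fun u => term h p u + evalL h l u := by
      funext u; rw [evalL_cons]
    rw [this]
    simpa using (term_tendsto h hh hvan p).add ih

def shiftL (l : List (ℝ × ℕ × ℝ)) : List (ℝ × ℕ × ℝ) :=
  l.map (fun p => (p.1, p.2.1, p.2.2 - 1))

theorem evalL_shift (h : ℝ → ℝ) (l : List (ℝ × ℕ × ℝ)) {t : ℝ} (ht : 0 < t) :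
    evalL h l t / t = evalL h (shiftL l) t := by
  induction l with
  | nil => simp [evalL_nil, shiftL]
  | cons p l ih =>
    have hcons : shiftL (p :: l) = (p.1, p.2.1, p.2.2 - 1) :: shiftL l := rfl
    rw [evalL_cons, hcons, evalL_cons, ← ih, add_div]
    congr 1
    simp only [term]
    rw [Real.rpow_sub ht, Real.rpow_one]
    ring


noncomputable def LL : ℕ → List (ℝ × ℕ × ℝ) := fun k => derL^[k] [(1, 0, 0)]

theorem LL_succ (k : ℕ) : LL (k+1) = derL (LL k) := by
  simp [LL, Function.iterate_succ_apply']

noncomputable def it (h : ℝ → ℝ) (k : ℕ) : ℝ → ℝ :=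
  fun x => if x ≤ 1 then 0 else evalL h (LL k) (x - 1)

theorem it_hasDerivAt (h : ℝ → ℝ) (hh : ContDiff ℝ (⊤ : ℕ∞) h)
    (hvan : ∀ x ∈ Set.Icc (0:ℝ) 1, h x = 0) (k : ℕ) (x : ℝ) :
    HasDerivAt (it h k) (it h (k+1) x) x := by
  rcases lt_trichotomy x 1 with hx | hx | hx
  · -- x < 1
    have hval : it h (k+1) x = 0 := by simp [it, hx.le]
    rw [hval]
    apply HasDerivAt.congr_of_eventuallyEq (hasDerivAt_const x (0:ℝ))
    filter_upwards [isOpen_Iio.mem_nhds (show x ∈ Set.Iio (1:ℝ) from hx)] with y hy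
    simp [it, (Set.mem_Iio.1 hy).le]
  · -- x = 1
    subst hx
    have hval : it h (k+1) 1 = 0 := by simp [it]
    rw [hval, hasDerivAt_iff_tendsto_slope]
    have hsplit : nhdsWithin (1:ℝ) {(1:ℝ)}ᶜ
        = nhdsWithin 1 (Set.Iio 1) ⊔ nhdsWithin 1 (Set.Ioi 1) :=
      (nhdsLT_sup_nhdsGT (1:ℝ)).symm
    rw [hsplit, Filter.tendsto_sup]
    constructor
    · -- left: slope is 0
      apply Filter.Tendsto.congr' _ tendsto_const_nhds
      filter_upwards [self_mem_nhdsWithin] with y hy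
      simp [slope_def_field, it, (Set.mem_Iio.1 hy).le]
    · -- right
      have hmap : Filter.Tendsto (fun y : ℝ => y - 1) (nhdsWithin 1 (Set.Ioi 1))
          (nhdsWithin 0 (Set.Ioi 0)) := by
        apply tendsto_nhdsWithin_of_tendsto_nhds_of_eventually_within
        · exact ((continuous_sub_right (1:ℝ)).tendsto' 1 0 (by norm_num)).mono_left
            nhdsWithin_le_nhds
        · filter_upwards [self_mem_nhdsWithin] with y hy
          exact sub_pos.2 (Set.mem_Ioi.1 hy)
      have := (evalL_tendsto h hh hvan (shiftL (LL k))).comp hmap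
      apply Filter.Tendsto.congr' _ this
      filter_upwards [self_mem_nhdsWithin] with y hy'
      have hy : 1 < y := Set.mem_Ioi.1 hy'
      have hy1 : ¬ y ≤ 1 := not_le.2 hy
      have hpos : 0 < y - 1 := by linarith
      simp only [Function.comp, slope_def_field, it, hy1, if_false, if_pos le_rfl]
      rw [← evalL_shift h (LL k) hpos]
      simp [div_eq_mul_inv]
  · -- x > 1
    have hev : it h k =ᶠ[nhds x] (fun y => evalL h (LL k) (y - 1)) := by
      filter_upwards [isOpen_Ioi.mem_nhds (show x ∈ Set.Ioi (1:ℝ) from hx)] with y hy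
      simp [it, not_le.2 (Set.mem_Ioi.1 hy)]
    have hval : it h (k+1) x = evalL h (derL (LL k)) (x - 1) := by
      simp only [it, not_le.2 hx, if_false, LL_succ]
    rw [hval]
    apply HasDerivAt.congr_of_eventuallyEq _ hev
    have hinner : HasDerivAt (fun y : ℝ => y - 1) 1 x := (hasDerivAt_id x).sub_const 1
    have houter := evalL_hasDerivAt h hh (LL k) (show 0 < x - 1 by linarith)
    have := HasDerivAt.comp x houter hinner
    rw [mul_one] at this
    exact this

theorem it_contDiff (h : ℝ → ℝ) (hh : ContDiff ℝ (⊤ : ℕ∞) h)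
    (hvan : ∀ x ∈ Set.Icc (0:ℝ) 1, h x = 0) :
    ContDiff ℝ (⊤ : ℕ∞) (it h 0) := by
  have hderiv : ∀ k, deriv (it h k) = it h (k+1) := by
    intro k; funext x; exact (it_hasDerivAt h hh hvan k x).deriv
  have hdiff : ∀ k, Differentiable ℝ (it h k) :=
    fun k x => (it_hasDerivAt h hh hvan k x).differentiableAt
  have main : ∀ n k, ContDiff ℝ (n : ℕ) (it h k) := by
    intro n
    induction n with
    | zero => intro k; exact contDiff_zero.2 (hdiff k).continuous
    | succ n ihn =>
      intro k
      have : ContDiff ℝ ((n : WithTop ℕ∞) + 1) (it h k) := by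
        rw [contDiff_succ_iff_deriv]
        refine ⟨hdiff k, by simp, ?_⟩
        rw [hderiv k]
        exact_mod_cast ihn (k+1)
      exact_mod_cast this
  rw [show ((⊤ : ℕ∞) : WithTop ℕ∞) = ((⊤ : ℕ∞)) from rfl]
  exact contDiff_infty.2 (fun n => main n 0)


end Stmt14Aux

noncomputable def delta14 : ℕ → ℝ
  | 0 => 1/2
  | (n+1) => 2 * (delta14 n)^4

theorem delta14_zero : delta14 0 = 1/2 := rfl
theorem delta14_succ (n : ℕ) : delta14 (n+1) = 2 * (delta14 n)^4 := rfl

open Stmt14Aux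

/-- On `M = ℝ`, the ideal of smooth real-valued functions vanishing identically on the
interval `[0,1]` is not finitely generated as a `C^∞(ℝ)`-module: there is no finite family
`g₁, …, g_k` of smooth functions vanishing on `[0,1]` such that every smooth function
vanishing on `[0,1]` is of the form `Σᵢ aᵢ·gᵢ` with `aᵢ` smooth. -/
theorem stmt14 :
    ¬ ∃ (k : ℕ) (g : Fin k → ℝ → ℝ),
      (∀ i, ContDiff ℝ (⊤ : ℕ∞) (g i)) ∧
      (∀ i, ∀ x ∈ Set.Icc (0 : ℝ) 1, g i x = 0) ∧
      (∀ f : ℝ → ℝ, ContDiff ℝ (⊤ : ℕ∞) f → (∀ x ∈ Set.Icc (0 : ℝ) 1, f x = 0) →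
        ∃ a : Fin k → ℝ → ℝ, (∀ i, ContDiff ℝ (⊤ : ℕ∞) (a i)) ∧
          f = ∑ i, a i * g i) := by
  rintro ⟨k, g, hg, hgvan, hgen⟩
  classical
  set h : ℝ → ℝ := fun x => ∑ i, (g i x)^2 with hh_def
  have hh : ContDiff ℝ (⊤ : ℕ∞) h := ContDiff.sum (fun i _ => (hg i).pow 2)
  have hpos : ∀ x, 0 ≤ h x := fun x => Finset.sum_nonneg (fun i _ => sq_nonneg _)
  have hvan : ∀ x ∈ Set.Icc (0:ℝ) 1, h x = 0 := by
    intro x hx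
    exact Finset.sum_eq_zero (fun i _ => by rw [hgvan i x hx]; ring)
  by_cases hcase : ∃ x, 1 < x ∧ h x = 0
  · -- easy case : some point beyond 1 where all generators vanish
    obtain ⟨x₀, hx₀, hx₀0⟩ := hcase
    have hf₀ : ContDiff ℝ (⊤ : ℕ∞) (fun x : ℝ => expNegInvGlue (x - 1)) :=
      ContDiff.comp expNegInvGlue.contDiff (contDiff_id.sub contDiff_const)
    have hf₀v : ∀ x ∈ Set.Icc (0:ℝ) 1, expNegInvGlue (x - 1) = 0 :=
      fun x hx => expNegInvGlue.zero_of_nonpos (by linarith [hx.2])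
    obtain ⟨a, _, hfa⟩ := hgen _ hf₀ hf₀v
    have hgz : ∀ i, g i x₀ = 0 := by
      intro i
      have hz := (Finset.sum_eq_zero_iff_of_nonneg
        (fun i (_ : i ∈ Finset.univ) => sq_nonneg (g i x₀))).1 hx₀0 i (Finset.mem_univ i)
      exact pow_eq_zero_iff (two_ne_zero) |>.1 hz
    have hzero : expNegInvGlue (x₀ - 1) = 0 := by
      have hcf := congrFun hfa x₀
      rw [hcf, Finset.sum_apply]
      simp only [Pi.mul_apply]
      exact Finset.sum_eq_zero (fun i _ => by rw [hgz i, mul_zero])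
    exact absurd hzero (ne_of_gt (expNegInvGlue.pos_of_pos (by linarith)))
  · -- main case : h > 0 beyond 1
    push_neg at hcase
    have hposgt : ∀ x, 1 < x → 0 < h x := fun x hx =>
      lt_of_le_of_ne (hpos x) (Ne.symm (hcase x hx))
    have hconth : Continuous (fun t : ℝ => h (1+t)) :=
      hh.continuous.comp (continuous_const.add continuous_id)
    -- positivity of G
    have hGpos : ∀ r : ℝ, 0 < r → 0 < Gd h 0 r := by
      intro r hr
      rw [Gd_zero]
      apply intervalIntegral.intervalIntegral_pos_of_pos_on
        (hconth.intervalIntegrable 0 r) _ hr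
      intro t ht
      exact hposgt _ (by linarith [ht.1])
    have hGmono := Gd_mono h hh hpos
    have hGnn := Gd_nonneg h hpos
    -- the function f
    set f : ℝ → ℝ := it h 0 with hf_def
    have hfsmooth : ContDiff ℝ (⊤ : ℕ∞) f := it_contDiff h hh hvan
    have hfvan : ∀ x ∈ Set.Icc (0:ℝ) 1, f x = 0 := by
      intro x hx; simp [hf_def, it, hx.2]
    obtain ⟨a, ha, hfa⟩ := hgen f hfsmooth hfvan
    -- the bound A
    have hScont : Continuous (fun x => ∑ i, (a i x)^2) :=
      continuous_finset_sum _ (fun i _ => ((ha i).continuous.pow 2))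
    obtain ⟨C, hC⟩ := (isCompact_Icc (a := (1:ℝ)) (b := 2)).exists_bound_of_continuousOn
      hScont.continuousOn
    have hC0 : 0 ≤ C := le_trans (norm_nonneg _) (hC 1 ⟨le_rfl, by norm_num⟩)
    set A : ℝ := C + 1 with hA_def
    have hA0 : 0 < A := by linarith
    have hptw : ∀ x ∈ Set.Icc (1:ℝ) 2, (f x)^2 ≤ A * h x := by
      intro x hx
      have h1 : f x = ∑ i, a i x * g i x := by
        rw [congrFun hfa x, Finset.sum_apply]; simp [Pi.mul_apply]
      rw [h1]
      calc (∑ i, a i x * g i x)^2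
          ≤ (∑ i, (a i x)^2) * (∑ i, (g i x)^2) :=
            Finset.sum_mul_sq_le_sq_mul_sq Finset.univ _ _
        _ ≤ A * h x := by
            apply mul_le_mul_of_nonneg_right _ (hpos x)
            have := hC x hx
            have habs : (∑ i, (a i x)^2) ≤ |∑ i, (a i x)^2| := le_abs_self _
            simp only [Real.norm_eq_abs] at this
            linarith
    -- formula for f on the right of 1
    have hf_eq : ∀ t : ℝ, 0 < t → f (1+t) = Gd h 0 (t ^ (4⁻¹:ℝ)) := by
      intro t ht
      have h2 : (1:ℝ) + t - 1 = t := by ring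
      have h3 : ¬ (1 + t ≤ 1) := by linarith
      simp only [hf_def, it, h3, if_false, h2]
      have : LL 0 = [((1:ℝ), (0:ℕ), (0:ℝ))] := rfl
      rw [this, evalL_cons, evalL_nil]
      simp [term, Real.rpow_zero]
    have hfcont : Continuous f := hfsmooth.continuous
    have hfcomp : Continuous (fun t : ℝ => (f (1+t))^2) :=
      ((hfcont.comp (continuous_const.add continuous_id)).pow 2)
    -- key recursion inequality
    have key : ∀ r : ℝ, 0 < r → r ≤ 1 →
        (r/2) * (Gd h 0 ((r/2) ^ (4⁻¹:ℝ)))^2 ≤ A * Gd h 0 r := by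
      intro r hr0 hr1
      have hint1 : ∫ t in (0:ℝ)..r, (f (1+t))^2 ≤ ∫ t in (0:ℝ)..r, A * h (1+t) := by
        apply intervalIntegral.integral_mono_on hr0.le
          (hfcomp.intervalIntegrable 0 r)
          ((continuous_const.mul hconth).intervalIntegrable 0 r)
        intro t ht
        exact hptw (1+t) ⟨by linarith [ht.1], by linarith [ht.2, hr1]⟩
      have hint2 : ∫ t in (0:ℝ)..r, A * h (1+t) = A * Gd h 0 r := by
        rw [intervalIntegral.integral_const_mul, Gd_zero]
      have hlow : (r/2) * (Gd h 0 ((r/2) ^ (4⁻¹:ℝ)))^2 ≤ ∫ t in (r/2)..r, (f (1+t))^2 := by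
        have hconstint : ∫ _t in (r/2)..r, (Gd h 0 ((r/2) ^ (4⁻¹:ℝ)))^2
            = (r/2) * (Gd h 0 ((r/2) ^ (4⁻¹:ℝ)))^2 := by
          rw [intervalIntegral.integral_const, smul_eq_mul]
          ring_nf
        rw [← hconstint]
        apply intervalIntegral.integral_mono_on (by linarith)
          (intervalIntegrable_const) (hfcomp.intervalIntegrable _ _)
        intro t ht
        have ht0 : 0 < t := by linarith [ht.1]
        rw [hf_eq t ht0]
        apply pow_le_pow_left₀ (hGnn _ (Real.rpow_nonneg (by linarith) _))
        apply hGmono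
        exact Real.rpow_le_rpow (by linarith) ht.1 (by norm_num)
      have hsplit : (∫ t in (0:ℝ)..(r/2), (f (1+t))^2) + ∫ t in (r/2)..r, (f (1+t))^2
          = ∫ t in (0:ℝ)..r, (f (1+t))^2 :=
        intervalIntegral.integral_add_adjacent_intervals (μ := MeasureTheory.volume)
          (hfcomp.intervalIntegrable _ _) (hfcomp.intervalIntegrable _ _)
      have hnn : 0 ≤ ∫ t in (0:ℝ)..(r/2), (f (1+t))^2 :=
        intervalIntegral.integral_nonneg (by linarith) (fun u _ => sq_nonneg _)
      have c1 : ∫ t in (0:ℝ)..r, (f (1+t))^2 ≤ A * Gd h 0 r := by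
        rw [← hint2]; exact hint1
      have c2 : (r/2) * (Gd h 0 ((r/2) ^ (4⁻¹:ℝ)))^2 ≤ ∫ t in (0:ℝ)..r, (f (1+t))^2 := by
        rw [← hsplit]; linarith
      exact c2.trans c1
    -- constants
    have hc0 : 0 < Gd h 0 (1/2) := hGpos _ (by norm_num)
    set c₀ : ℝ := Gd h 0 (1/2) with hc0_def
    set K : ℝ := min 1 (c₀ / (4*A)) with hK_def
    have hK0 : 0 < K := lt_min (by norm_num) (div_pos hc0 (by linarith))
    have hK1 : K ≤ 1 := min_le_left _ _
    -- the sequence δ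
    have hδ0 : delta14 0 = 1/2 := delta14_zero
    have hδs : ∀ n, delta14 (n+1) = 2 * (delta14 n)^4 := delta14_succ
    have hδpos : ∀ n, 0 < delta14 n := by
      intro n; induction n with
      | zero => rw [hδ0]; norm_num
      | succ n ih => rw [hδs]; positivity
    have hδhalf : ∀ n, delta14 n ≤ 1/2 := by
      intro n; induction n with
      | zero => rw [hδ0]
      | succ n ih =>
        rw [hδs]
        have h4 : (delta14 n)^4 ≤ (1/2:ℝ)^4 := pow_le_pow_left₀ (hδpos n).le ih 4
        norm_num at h4 ⊢
        linarith
    -- the main induction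
    have claim : ∀ n, ∀ r : ℝ, delta14 n ≤ r → r ≤ 1 → 4*A*K^(2^n) * r^2 ≤ Gd h 0 r := by
      intro n
      induction n with
      | zero =>
        intro r hr1 hr2
        have hrge : (1:ℝ)/2 ≤ r := by rw [← hδ0]; exact hr1
        have hKle : K ≤ c₀ / (4*A) := min_le_right _ _
        have hr2' : r^2 ≤ 1 := by nlinarith
        have h4A : (0:ℝ) ≤ 4*A := by linarith
        have h4AK : (0:ℝ) ≤ 4*A*K := mul_nonneg h4A hK0.le
        have hKe : K^(2^0) = K := by norm_num
        calc 4*A*K^(2^0) * r^2 = (4*A*K) * r^2 := by rw [hKe]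
          _ ≤ (4*A*K) * 1 := mul_le_mul_of_nonneg_left hr2' h4AK
          _ = 4*A*K := mul_one _
          _ ≤ 4*A*(c₀/(4*A)) := mul_le_mul_of_nonneg_left hKle h4A
          _ = c₀ := by field_simp
          _ ≤ Gd h 0 r := hGmono _ _ hrge
      | succ n ih =>
        intro r hr1 hr2
        by_cases hcmp : delta14 n ≤ r
        · have hKpow : K^(2^(n+1)) ≤ K^(2^n) :=
            pow_le_pow_of_le_one hK0.le hK1 (Nat.pow_le_pow_right (by norm_num) (Nat.le_succ n))
          have h1 : (0:ℝ) ≤ 4*A*r^2 := by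
            apply mul_nonneg (by linarith) (sq_nonneg r)
          have h2 : 4*A*K^(2^(n+1))*r^2 ≤ 4*A*K^(2^n)*r^2 := by
            nlinarith [mul_nonneg h1 (sub_nonneg.2 hKpow)]
          linarith [ih r hcmp hr2]
        · push_neg at hcmp
          set s : ℝ := (r/2) ^ (4⁻¹:ℝ) with hs_def
          have hr0 : 0 < r := lt_of_lt_of_le (hδpos (n+1)) hr1
          have hs_ge : delta14 n ≤ s := by
            have h1 : (delta14 n)^4 ≤ r/2 := by
              have := hr1; rw [hδs] at this; linarith
            have h2 : ((delta14 n)^4 : ℝ) ^ (4⁻¹:ℝ) ≤ (r/2) ^ (4⁻¹:ℝ) :=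
              Real.rpow_le_rpow (by positivity) h1 (by norm_num)
            have hconv : ((delta14 n)^4 : ℝ) ^ (4⁻¹:ℝ) = delta14 n := by
              rw [← Real.rpow_natCast (delta14 n) 4, ← Real.rpow_mul (hδpos n).le]
              norm_num
            rwa [hconv] at h2
          have hs_le : s ≤ 1 := Real.rpow_le_one (by linarith) (by linarith) (by norm_num)
          have hIH := ih s hs_ge hs_le
          have hkey := key r hr0 hr2
          have hs4 : s^2 * s^2 = r/2 := by
            rw [hs_def, ← Real.rpow_natCast ((r/2) ^ (4⁻¹:ℝ)) 2, ← Real.rpow_mul (by linarith),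
              ← Real.rpow_add (by positivity)]
            norm_num
          have hGs_nn : 0 ≤ Gd h 0 s := hGnn _ (Real.rpow_nonneg (by linarith) _)
          have hsnn : (0:ℝ) ≤ 4*A*K^(2^n) * s^2 :=
            mul_nonneg (mul_nonneg (by linarith) (pow_nonneg hK0.le _)) (sq_nonneg s)
          have hsq : (4*A*K^(2^n) * s^2)^2 ≤ (Gd h 0 s)^2 :=
            pow_le_pow_left₀ hsnn hIH 2
          have hexp : (K^(2^n))^2 = K^(2^(n+1)) := by
            rw [← pow_mul, pow_succ]
          have hchain : (r/2) * (4*A*K^(2^n) * s^2)^2 ≤ A * Gd h 0 r := by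
            calc (r/2) * (4*A*K^(2^n) * s^2)^2 ≤ (r/2) * (Gd h 0 s)^2 := by
                  apply mul_le_mul_of_nonneg_left hsq (by linarith)
              _ ≤ A * Gd h 0 r := hkey
          have hlhs : (r/2) * (4*A*K^(2^n) * s^2)^2 = A * (4*A*K^(2^(n+1)) * r^2) := by
            have : (4*A*K^(2^n) * s^2)^2 = 16*A^2*(K^(2^n))^2 * (s^2*s^2) := by ring
            rw [this, hexp, hs4]
            ring
          rw [hlhs] at hchain
          have := le_of_mul_le_mul_left (by linarith [hchain] : A * (4*A*K^(2^(n+1)) * r^2) ≤ A * Gd h 0 r) hA0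
          exact this
    -- flatness bound on G
    obtain ⟨C₃, hC₃pos, hC₃⟩ := Gd_bound h hh hvan 0 3
    -- combine : 4*A*K^(2^n) ≤ C₃ * delta14 n
    have hfin : ∀ n, 4*A*K^(2^n) ≤ C₃ * delta14 n := by
      intro n
      have h1 := claim n (delta14 n) le_rfl (by linarith [hδhalf n])
      have h2 : |Gd h 0 (delta14 n)| ≤ C₃ * (delta14 n)^3 := hC₃ (delta14 n) ⟨(hδpos n).le, by linarith [hδhalf n]⟩
      have h3 : Gd h 0 (delta14 n) ≤ C₃ * (delta14 n)^3 := le_trans (le_abs_self _) h2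
      have h4 : 4*A*K^(2^n) * (delta14 n)^2 ≤ (C₃ * delta14 n) * (delta14 n)^2 := by nlinarith [hδpos n]
      exact le_of_mul_le_mul_right h4 (pow_pos (hδpos n) 2)
    -- decay of δ
    have hdec : ∀ m, delta14 (m+2) ≤ (1/2:ℝ)^((m+2) * 2^(m+2)) := by
      intro m
      induction m with
      | zero =>
        have e1 : delta14 2 = 2 * (delta14 1)^4 := rfl
        have e2 : delta14 1 = 2 * (delta14 0)^4 := rfl
        have hd2 : delta14 2 = 1/2048 := by
          rw [e1, e2, hδ0]; norm_num
        simp only [Nat.zero_add]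
        rw [hd2]
        norm_num
      | succ m ih =>
        have e1 : delta14 (m+1+2) = 2 * (delta14 (m+2))^4 := rfl
        rw [e1]
        have h1 : (delta14 (m+2))^4 ≤ ((1/2:ℝ)^((m+2) * 2^(m+2)))^4 :=
          pow_le_pow_left₀ (hδpos _).le ih 4
        have h2 : ((1/2:ℝ)^((m+2) * 2^(m+2)))^4 = (1/2:ℝ)^(4*((m+2) * 2^(m+2))) := by
          rw [← pow_mul]; ring_nf
        have h3 : (2:ℝ) * (1/2:ℝ)^(4*((m+2) * 2^(m+2))) ≤ (1/2:ℝ)^((m+3) * 2^(m+3)) := by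
          have hle : (m+3) * 2^(m+3) + 1 ≤ 4*((m+2) * 2^(m+2)) := by
            have h2m : 1 ≤ 2^(m+2) := Nat.one_le_two_pow
            have hp : (2:ℕ)^(m+3) = 2*2^(m+2) := by rw [pow_succ]; ring
            calc (m+3) * 2^(m+3) + 1 = (m+3)*(2*2^(m+2)) + 1 := by rw [hp]
              _ ≤ 4*((m+2) * 2^(m+2)) := by nlinarith [h2m, Nat.zero_le (m*2^(m+2))]
          have : (1/2:ℝ)^(4*((m+2) * 2^(m+2))) ≤ (1/2:ℝ)^((m+3) * 2^(m+3) + 1) :=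
            pow_le_pow_of_le_one (by norm_num) (by norm_num) hle
          calc (2:ℝ) * (1/2:ℝ)^(4*((m+2) * 2^(m+2)))
              ≤ 2 * (1/2:ℝ)^((m+3) * 2^(m+3) + 1) := by linarith
            _ = (1/2:ℝ)^((m+3) * 2^(m+3)) := by rw [pow_succ]; ring
        calc 2 * (delta14 (m+2))^4 ≤ 2 * (1/2:ℝ)^(4*((m+2) * 2^(m+2))) := by
              rw [← h2]; linarith
          _ ≤ (1/2:ℝ)^((m+3) * 2^(m+3)) := h3
          _ = (1/2:ℝ)^((m+1+2) * 2^(m+1+2)) := by norm_num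
    -- choose m large
    obtain ⟨m₁, hm₁⟩ := pow_unbounded_of_one_lt (2 / K) (by norm_num : (1:ℝ) < 2)
    obtain ⟨m₂, hm₂⟩ := pow_unbounded_of_one_lt (C₃ / (4*A)) (by norm_num : (1:ℝ) < 2)
    set m : ℕ := m₁ + m₂ + 2 with hm_def
    -- K * 2^m ≥ 2
    have hK2m : 2 ≤ K * 2^m := by
      have h1 : (2:ℝ)^m₁ ≤ 2^m := by
        apply pow_le_pow_right₀ (by norm_num)
        omega
      have h2 : 2 / K < 2^m := lt_of_lt_of_le hm₁ h1
      rw [div_lt_iff₀ hK0] at h2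
      linarith [mul_comm K ((2:ℝ)^m)]
    -- C₃ < 4*A*2^(2^m)
    have hC₃m : C₃ < 4*A*2^(2^m) := by
      have h1 : (2:ℝ)^m₂ ≤ 2^(2^m) := by
        apply pow_le_pow_right₀ (by norm_num)
        calc m₂ ≤ m := by omega
          _ ≤ 2^m := (Nat.lt_two_pow_self).le
      have h2 : C₃ / (4*A) < 2^(2^m) := lt_of_lt_of_le hm₂ h1
      rw [div_lt_iff₀ (by linarith : (0:ℝ) < 4*A)] at h2
      linarith [mul_comm (4*A) ((2:ℝ)^(2^m))]
    -- final contradiction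
    have hup : C₃ * delta14 m ≤ C₃ * ((1/2:ℝ)^m)^(2^m) := by
      apply mul_le_mul_of_nonneg_left _ hC₃pos.le
      have hd := hdec (m₁ + m₂)
      rw [← hm_def] at hd
      calc delta14 m ≤ (1/2:ℝ)^(m * 2^m) := hd
        _ = ((1/2:ℝ)^m)^(2^m) := by rw [← pow_mul]
    have hP : (0:ℝ) < ((1/2:ℝ)^m)^(2^m) := by positivity
    have hKge : 2*(1/2:ℝ)^m ≤ K := by
      have h2m : (0:ℝ) < 2^m := by positivity
      have hinv : (1/2:ℝ)^m = ((2:ℝ)^m)⁻¹ := by rw [one_div, inv_pow]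
      rw [hinv, mul_comm (2:ℝ) ((2:ℝ)^m)⁻¹, ← div_eq_inv_mul, div_le_iff₀ h2m]
      linarith [hK2m, mul_comm K ((2:ℝ)^m)]
    have hpow2 : (2*(1/2:ℝ)^m)^(2^m) ≤ K^(2^m) := pow_le_pow_left₀ (by positivity) hKge _
    have hmulpow : (2*(1/2:ℝ)^m)^(2^m) = 2^(2^m) * ((1/2:ℝ)^m)^(2^m) := mul_pow _ _ _
    have hstrict : C₃ * ((1/2:ℝ)^m)^(2^m) < 4*A*2^(2^m) * ((1/2:ℝ)^m)^(2^m) :=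
      mul_lt_mul_of_pos_right hC₃m hP
    have h5 : 4*A*(2:ℝ)^(2^m) * ((1/2:ℝ)^m)^(2^m) = 4*A*((2:ℝ)^(2^m) * ((1/2:ℝ)^m)^(2^m)) := by
      ring
    have h6 : 4*A*((2:ℝ)^(2^m) * ((1/2:ℝ)^m)^(2^m)) ≤ 4*A*K^(2^m) := by
      apply mul_le_mul_of_nonneg_left _ (by linarith)
      rw [← hmulpow]; exact hpow2
    have final1 : (4:ℝ)*A*K^(2^m) ≤ C₃ * ((1/2:ℝ)^m)^(2^m) := (hfin m).trans hup
    have final2 : C₃ * ((1/2:ℝ)^m)^(2^m) < 4*A*K^(2^m) := lt_of_lt_of_le (hstrict.trans_eq h5) h6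
    exact absurd final1 (not_le.2 final2)
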